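/- Let S1, S2 ⊆ Z^n × Z_{≥0} be strongly non-negative semigroups with almost all levels (m(S1) = m(S2) = 1) and let S = S1 ⊕_t S2 be their levelwise sum. Let Δ_0(S_i) ⊆ R^n denote the projection to R^n of the Newton-Okounkov body Δ(S_i) = Con(S_i) ∩ π^{-1}(1). Then Δ_0(S) equals the Minkowski sum Δ_0(S1) + Δ_0(S2). -/

import Mathlib

open Pointwise Filter Topology

/-- The smallest closed convex cone (with apex at the origin) containing a set `T`. -/
def coneGen {V : Type*} [AddCommGroup V] [Module ℝ V] [TopologicalSpace V]
    (T : Set V) : Set V :=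
  closure {x | ∃ (s : Finset V) (c : V → ℝ),
    (s : Set V) ⊆ T ∧ (∀ v ∈ s, 0 ≤ c v) ∧ x = ∑ v ∈ s, c v • v}

/-- The coercion of an integral point of `ℤ^n × ℤ` into `ℝ^n × ℝ`. -/
def intCastPt {n : ℕ} (p : (Fin n → ℤ) × ℤ) : (Fin n → ℝ) × ℝ :=
  (fun i => (p.1 i : ℝ), (p.2 : ℝ))

/-- The levelwise sum `X ⊕_t Y`: at each level (last coordinate) the Minkowski sum of the
corresponding slices. -/
def levelwiseSum {n : ℕ} (X Y : Set ((Fin n → ℤ) × ℤ)) : Set ((Fin n → ℤ) × ℤ) :=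
  {p | ∃ a b : Fin n → ℤ, (a, p.2) ∈ X ∧ (b, p.2) ∈ Y ∧ p.1 = a + b}

/-- The Newton–Okounkov body of a non-negative semigroup (with `m(S) = 1`) projected to
`ℝ^n`: the level-1 slice of the closed convex cone generated by `S`. -/
def NObody0 {n : ℕ} (S : Set ((Fin n → ℤ) × ℤ)) : Set (Fin n → ℝ) :=
  {y | ((y, (1 : ℝ)) : (Fin n → ℝ) × ℝ) ∈ coneGen (intCastPt '' S)}

namespace Stmt14

variable {n : ℕ}

def precone (T : Set ((Fin n → ℝ) × ℝ)) : Set ((Fin n → ℝ) × ℝ) :=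
  {x | ∃ (s : Finset ((Fin n → ℝ) × ℝ)) (c : ((Fin n → ℝ) × ℝ) → ℝ),
    (s : Set ((Fin n → ℝ) × ℝ)) ⊆ T ∧ (∀ v ∈ s, 0 ≤ c v) ∧ x = ∑ v ∈ s, c v • v}

lemma coneGen_def (T : Set ((Fin n → ℝ) × ℝ)) : coneGen T = closure (precone T) := rfl

lemma smul_mem_precone_of_mem {T : Set ((Fin n → ℝ) × ℝ)} {v : (Fin n → ℝ) × ℝ}
    (hv : v ∈ T) {r : ℝ} (hr : 0 ≤ r) : r • v ∈ precone T := by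
  classical
  exact ⟨{v}, fun _ => r, by simpa using hv, fun _ _ => hr, by simp⟩

lemma smul_mem_precone {T : Set ((Fin n → ℝ) × ℝ)} {x : (Fin n → ℝ) × ℝ}
    (hx : x ∈ precone T) {r : ℝ} (hr : 0 ≤ r) : r • x ∈ precone T := by
  obtain ⟨s, c, hsT, hc, rfl⟩ := hx
  refine ⟨s, fun v => r * c v, hsT, fun v hv => mul_nonneg hr (hc v hv), ?_⟩
  rw [Finset.smul_sum]
  exact Finset.sum_congr rfl fun v hv => (mul_smul r (c v) v).symm

lemma smul_mem_coneGen {T : Set ((Fin n → ℝ) × ℝ)} {x : (Fin n → ℝ) × ℝ}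
    (hx : x ∈ coneGen T) {r : ℝ} (hr : 0 ≤ r) : r • x ∈ coneGen T := by
  have h1 : r • x ∈ (r • ·) '' closure (precone T) := ⟨x, hx, rfl⟩
  have h2 := image_closure_subset_closure_image (continuous_const_smul r)
    (s := precone T) h1
  refine closure_mono ?_ h2
  rintro y ⟨z, hz, rfl⟩
  exact smul_mem_precone hz hr

lemma intCastPt_injective : Function.Injective (intCastPt (n := n)) := by
  intro p q h
  have h1 : ∀ i, ((p.1 i : ℝ)) = ((q.1 i : ℝ)) := fun i => congrFun (congrArg Prod.fst h) i
  have h2 : ((p.2 : ℝ)) = ((q.2 : ℝ)) := congrArg Prod.snd h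
  refine Prod.ext (funext fun i => ?_) ?_
  · exact_mod_cast h1 i
  · exact_mod_cast h2

lemma mem_precone_int {S : Set ((Fin n → ℤ) × ℤ)} {x : (Fin n → ℝ) × ℝ}
    (hx : x ∈ precone (intCastPt '' S)) :
    ∃ (t : Finset ((Fin n → ℤ) × ℤ)) (c : ((Fin n → ℤ) × ℤ) → ℝ),
      (↑t : Set ((Fin n → ℤ) × ℤ)) ⊆ S ∧ (∀ p ∈ t, 0 ≤ c p) ∧
      x = ∑ p ∈ t, c p • intCastPt p := by
  classical
  obtain ⟨s, c, hsT, hc, rfl⟩ := hx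
  have hex : ∀ v ∈ s, ∃ p, p ∈ S ∧ intCastPt p = v := fun v hv => hsT hv
  choose! g hgS hgv using hex
  refine ⟨s.image g, fun p => c (intCastPt p), ?_, ?_, ?_⟩
  · intro p hp
    simp only [Finset.coe_image, Set.mem_image, Finset.mem_coe] at hp
    obtain ⟨v, hv, rfl⟩ := hp
    exact hgS v hv
  · intro p hp
    simp only [Finset.mem_image] at hp
    obtain ⟨v, hv, rfl⟩ := hp
    show 0 ≤ c (intCastPt (g v))
    rw [hgv v hv]
    exact hc v hv
  · rw [Finset.sum_image]
    · refine Finset.sum_congr rfl fun v hv => ?_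
      show c v • v = c (intCastPt (g v)) • intCastPt (g v)
      rw [hgv v hv]
    · intro a ha b hb hab
      have : intCastPt (g a) = intCastPt (g b) := by rw [hab]
      rwa [hgv a ha, hgv b hb] at this

lemma coneGen_snd_nonneg {S : Set ((Fin n → ℤ) × ℤ)} (hS : ∀ p ∈ S, 0 ≤ p.2)
    {x : (Fin n → ℝ) × ℝ} (hx : x ∈ coneGen (intCastPt '' S)) : 0 ≤ x.2 := by
  have hcl : IsClosed {x : (Fin n → ℝ) × ℝ | 0 ≤ x.2} :=
    IsClosed.preimage continuous_snd isClosed_Ici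
  have hsub : precone (intCastPt '' S) ⊆ {x : (Fin n → ℝ) × ℝ | 0 ≤ x.2} := by
    rintro x ⟨s, c, hsT, hc, rfl⟩
    simp only [Set.mem_setOf_eq, Prod.snd_sum]
    refine Finset.sum_nonneg fun v hv => ?_
    obtain ⟨p, hp, rfl⟩ := hsT hv
    have h2 : (0:ℝ) ≤ (p.2 : ℝ) := by exact_mod_cast hS p hp
    have : (c (intCastPt p) • intCastPt p).2 = c (intCastPt p) * (p.2 : ℝ) := rfl
    rw [this]
    exact mul_nonneg (hc _ hv) h2
  exact closure_minimal hsub hcl hx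

lemma isClosed_NObody0 (S : Set ((Fin n → ℤ) × ℤ)) : IsClosed (NObody0 S) := by
  have : NObody0 S = (fun y : Fin n → ℝ => ((y, (1:ℝ)) : (Fin n → ℝ) × ℝ)) ⁻¹'
      coneGen (intCastPt '' S) := rfl
  rw [this]
  exact IsClosed.preimage (Continuous.prodMk continuous_id continuous_const) isClosed_closure

/-- The set of normalized points `a / h` for `(a, h) ∈ S`, `h > 0`. -/
def ratioSet (S : Set ((Fin n → ℤ) × ℤ)) : Set (Fin n → ℝ) :=
  {y | ∃ p, p ∈ S ∧ 0 < p.2 ∧ y = fun i => (p.1 i : ℝ) / (p.2 : ℝ)}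

lemma ratioSet_subset_NObody0 {S : Set ((Fin n → ℤ) × ℤ)} : ratioSet S ⊆ NObody0 S := by
  rintro y ⟨p, hp, hpos, rfl⟩
  have h2 : (0:ℝ) < (p.2 : ℝ) := by exact_mod_cast hpos
  have key : (((fun i => (p.1 i : ℝ) / (p.2 : ℝ)) , (1:ℝ)) : (Fin n → ℝ) × ℝ)
      = ((p.2 : ℝ))⁻¹ • intCastPt p := by
    refine Prod.ext (funext fun i => ?_) ?_
    · show (p.1 i : ℝ) / (p.2 : ℝ) = ((p.2:ℝ))⁻¹ * (p.1 i : ℝ)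
      rw [div_eq_inv_mul]
    · show (1:ℝ) = ((p.2:ℝ))⁻¹ * (p.2:ℝ)
      rw [inv_mul_cancel₀ (ne_of_gt h2)]
  show (((fun i => (p.1 i : ℝ) / (p.2 : ℝ)), (1:ℝ)) : (Fin n → ℝ) × ℝ)
      ∈ coneGen (intCastPt '' S)
  rw [key]
  exact subset_closure (smul_mem_precone_of_mem (Set.mem_image_of_mem intCastPt hp) (inv_nonneg.mpr (le_of_lt h2)))

lemma nsmul_mem {S : Set ((Fin n → ℤ) × ℤ)} (hadd : ∀ p ∈ S, ∀ q ∈ S, p + q ∈ S)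
    {p : (Fin n → ℤ) × ℤ} (hp : p ∈ S) : ∀ k : ℕ, 0 < k → k • p ∈ S := by
  intro k hk
  induction k with
  | zero => exact absurd hk (lt_irrefl 0)
  | succ k ih =>
    rcases Nat.eq_zero_or_pos k with h0 | hpos
    · subst h0; simpa using hp
    · have := hadd _ (ih hpos) _ hp
      rwa [succ_nsmul]

lemma sum_nsmul_mem {S : Set ((Fin n → ℤ) × ℤ)} (hadd : ∀ p ∈ S, ∀ q ∈ S, p + q ∈ S)
    (m : ((Fin n → ℤ) × ℤ) → ℕ) (t : Finset ((Fin n → ℤ) × ℤ)) :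
    (↑t : Set ((Fin n → ℤ) × ℤ)) ⊆ S →
    (∀ p ∈ t, m p = 0) ∨ (∑ p ∈ t, m p • p) ∈ S := by
  classical
  induction t using Finset.induction_on with
  | empty => intro _; exact Or.inl (by simp)
  | @insert a t ha ih =>
    intro hsub
    have haS : a ∈ S := hsub (Finset.mem_insert_self a t)
    have htS : (↑t : Set ((Fin n → ℤ) × ℤ)) ⊆ S :=
      fun p hp => hsub (Finset.mem_insert_of_mem hp)
    rw [Finset.sum_insert ha]
    rcases Nat.eq_zero_or_pos (m a) with h0 | hapos
    · rcases ih htS with hz | hmem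
      · exact Or.inl (by
          intro p hp
          rcases Finset.mem_insert.mp hp with rfl | hp'
          · exact h0
          · exact hz p hp')
      · right; rw [h0, zero_smul, zero_add]; exact hmem
    · right
      rcases ih htS with hz | hmem
      · have : ∑ p ∈ t, m p • p = 0 :=
          Finset.sum_eq_zero fun p hp => by rw [hz p hp, zero_smul]
        rw [this, add_zero]
        exact nsmul_mem hadd haS (m a) hapos
      · exact hadd _ (nsmul_mem hadd haS (m a) hapos) _ hmem

lemma precone_ratio {S : Set ((Fin n → ℤ) × ℤ)} (hadd : ∀ p ∈ S, ∀ q ∈ S, p + q ∈ S)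
    {z : (Fin n → ℝ) × ℝ} (hz : z ∈ precone (intCastPt '' S)) (hz2 : 0 < z.2) :
    (z.2)⁻¹ • z.1 ∈ closure (ratioSet S) := by
  classical
  obtain ⟨t, c, htS, hc, hzeq⟩ := mem_precone_int hz
  set P : ℕ → ((Fin n → ℤ) × ℤ) := fun N => ∑ p ∈ t, (⌊(N:ℝ) * c p⌋₊) • p with hP
  have hcoef : ∀ p ∈ t, Tendsto (fun N : ℕ => (⌊(N:ℝ) * c p⌋₊ : ℝ) / N) atTop (𝓝 (c p)) := by
    intro p hp
    have hcp := hc p hp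
    apply tendsto_of_tendsto_of_tendsto_of_le_of_le'
      (g := fun N : ℕ => c p - 1 / N) (h := fun _ : ℕ => c p)
    · simpa using tendsto_const_nhds.sub (tendsto_one_div_atTop_nhds_zero_nat (𝕜 := ℝ))
    · exact tendsto_const_nhds
    · filter_upwards [eventually_ge_atTop 1] with N hN
      have hN0 : (0:ℝ) < N := by exact_mod_cast hN
      have h1 : (N:ℝ) * c p - 1 < ⌊(N:ℝ) * c p⌋₊ := Nat.sub_one_lt_floor _
      have heq : c p - 1 / N = ((N:ℝ) * c p - 1) / N := by
        rw [sub_div, mul_div_cancel_left₀ _ (ne_of_gt hN0)]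
      rw [heq]
      gcongr
    · filter_upwards [eventually_ge_atTop 1] with N hN
      have hN0 : (0:ℝ) < N := by exact_mod_cast hN
      have h2 : (⌊(N:ℝ) * c p⌋₊ : ℝ) ≤ (N:ℝ) * c p :=
        Nat.floor_le (by positivity)
      calc (⌊(N:ℝ) * c p⌋₊ : ℝ) / N ≤ ((N:ℝ) * c p) / N := by gcongr
        _ = c p := by field_simp
  have hz2eq : z.2 = ∑ p ∈ t, c p * (p.2 : ℝ) := by
    rw [hzeq, Prod.snd_sum]
    exact Finset.sum_congr rfl fun p _ => rfl
  have hz1eq : ∀ i, z.1 i = ∑ p ∈ t, c p * (p.1 i : ℝ) := by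
    intro i
    rw [hzeq, Prod.fst_sum, Finset.sum_apply]
    exact Finset.sum_congr rfl fun p _ => rfl
  have hPsnd2 : ∀ N : ℕ, (P N).2 = ∑ p ∈ t, (⌊(N:ℝ) * c p⌋₊ : ℤ) * p.2 := by
    intro N
    rw [hP, Prod.snd_sum]
    refine Finset.sum_congr rfl fun p hp => ?_
    simp [Prod.smul_snd, nsmul_eq_mul]
  have hPfst2 : ∀ N : ℕ, ∀ i, (P N).1 i = ∑ p ∈ t, (⌊(N:ℝ) * c p⌋₊ : ℤ) * p.1 i := by
    intro N i
    rw [hP, Prod.fst_sum, Finset.sum_apply]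
    refine Finset.sum_congr rfl fun p hp => ?_
    simp [Prod.smul_fst, nsmul_eq_mul]
  have hPsnd : Tendsto (fun N : ℕ => ((P N).2 : ℝ) / N) atTop (𝓝 z.2) := by
    have key : ∀ N : ℕ, ((P N).2 : ℝ) / N
        = ∑ p ∈ t, ((⌊(N:ℝ) * c p⌋₊ : ℝ) / N) * (p.2 : ℝ) := by
      intro N
      rw [hPsnd2 N]
      push_cast
      rw [Finset.sum_div]
      exact Finset.sum_congr rfl fun p hp => by ring
    simp only [key]
    rw [hz2eq]
    exact tendsto_finset_sum t fun p hp => (hcoef p hp).mul_const _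
  have hPfst : ∀ i, Tendsto (fun N : ℕ => (((P N).1 i : ℝ)) / N) atTop (𝓝 (z.1 i)) := by
    intro i
    have key : ∀ N : ℕ, ((P N).1 i : ℝ) / N
        = ∑ p ∈ t, ((⌊(N:ℝ) * c p⌋₊ : ℝ) / N) * (p.1 i : ℝ) := by
      intro N
      rw [hPfst2 N i]
      push_cast
      rw [Finset.sum_div]
      exact Finset.sum_congr rfl fun p hp => by ring
    simp only [key]
    rw [hz1eq i]
    exact tendsto_finset_sum t fun p hp => (hcoef p hp).mul_const _
  set y : ℕ → (Fin n → ℝ) := fun N i => ((P N).1 i : ℝ) / ((P N).2 : ℝ) with hy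
  have htend : Tendsto y atTop (𝓝 ((z.2)⁻¹ • z.1)) := by
    rw [tendsto_pi_nhds]
    intro i
    have hval : ((z.2)⁻¹ • z.1) i = z.1 i / z.2 := by
      simp [Pi.smul_apply, smul_eq_mul, inv_mul_eq_div]
    rw [hval]
    have hdiv : Tendsto (fun N : ℕ => (((P N).1 i : ℝ) / N) / (((P N).2 : ℝ) / N))
        atTop (𝓝 (z.1 i / z.2)) := (hPfst i).div hPsnd (ne_of_gt hz2)
    apply hdiv.congr'
    filter_upwards [eventually_ge_atTop 1] with N hN
    have hNne : (N:ℝ) ≠ 0 := by positivity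
    rcases eq_or_ne ((P N).2 : ℝ) 0 with h0 | h0
    · simp [hy, h0]
    · show (((P N).1 i : ℝ) / N) / (((P N).2 : ℝ) / N) = ((P N).1 i : ℝ) / ((P N).2 : ℝ)
      field_simp
  have hmem : ∀ᶠ N in atTop, y N ∈ ratioSet S := by
    have hev : ∀ᶠ N in atTop, ((P N).2 : ℝ) / N ∈ Set.Ioi (0:ℝ) :=
      hPsnd (Ioi_mem_nhds hz2)
    filter_upwards [hev, eventually_ge_atTop 1] with N hN hN1
    have hNpos : (0:ℝ) < N := by
      have : (1:ℕ) ≤ N := hN1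
      exact_mod_cast Nat.lt_of_lt_of_le Nat.zero_lt_one this
    have hbpos : (0:ℝ) < ((P N).2 : ℝ) := by
      have := mul_pos (Set.mem_Ioi.mp hN) hNpos
      rwa [div_mul_cancel₀ _ (ne_of_gt hNpos)] at this
    have hbposz : 0 < (P N).2 := by exact_mod_cast hbpos
    have hPmem : P N ∈ S := by
      rcases sum_nsmul_mem hadd (fun p => ⌊(N:ℝ) * c p⌋₊) t htS with hz0 | hmem'
      · exfalso
        have hzero : P N = 0 := by
          rw [hP]
          exact Finset.sum_eq_zero fun p hp => by rw [hz0 p hp, zero_smul]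
        rw [hzero] at hbposz
        exact lt_irrefl 0 hbposz
      · exact hmem'
    exact ⟨P N, hPmem, hbposz, rfl⟩
  exact mem_closure_of_tendsto htend hmem

lemma NObody0_subset_closure_ratioSet {S : Set ((Fin n → ℤ) × ℤ)}
    (hadd : ∀ p ∈ S, ∀ q ∈ S, p + q ∈ S) :
    NObody0 S ⊆ closure (ratioSet S) := by
  intro y hy
  have hy' : ((y, (1:ℝ)) : (Fin n → ℝ) × ℝ) ∈ closure (precone (intCastPt '' S)) := hy
  rw [mem_closure_iff_seq_limit] at hy'
  obtain ⟨z, hzmem, hztend⟩ := hy'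
  have hsnd : Tendsto (fun k => (z k).2) atTop (𝓝 (1:ℝ)) :=
    (continuous_snd.tendsto _).comp hztend
  have hfst : Tendsto (fun k => (z k).1) atTop (𝓝 y) :=
    (continuous_fst.tendsto _).comp hztend
  have hev : ∀ᶠ k in atTop, (0:ℝ) < (z k).2 := hsnd (Ioi_mem_nhds one_pos)
  have hwmem : ∀ᶠ k in atTop, ((z k).2)⁻¹ • (z k).1 ∈ closure (ratioSet S) := by
    filter_upwards [hev] with k hk
    exact precone_ratio hadd (hzmem k) hk
  have hwtend : Tendsto (fun k => ((z k).2)⁻¹ • (z k).1) atTop (𝓝 y) := by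
    have h1 : Tendsto (fun k => ((z k).2)⁻¹) atTop (𝓝 (1:ℝ)⁻¹) :=
      hsnd.inv₀ one_ne_zero
    have := h1.smul hfst
    simpa using this
  have : y ∈ closure (closure (ratioSet S)) := mem_closure_of_tendsto hwtend hwmem
  rwa [closure_closure] at this

set_option maxHeartbeats 1000000 in
lemma isCompact_NObody0 {S : Set ((Fin n → ℤ) × ℤ)}
    (hnneg : ∀ p ∈ S, 0 ≤ p.2)
    (hlevel : ∀ x ∈ coneGen (intCastPt '' S), x.2 = 0 → x = 0) :
    IsCompact (NObody0 S) := by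
  apply Metric.isCompact_of_isClosed_isBounded (isClosed_NObody0 S)
  by_contra hb
  rw [isBounded_iff_forall_norm_le] at hb
  push_neg at hb
  have h' : ∀ k : ℕ, ∃ y ∈ NObody0 S, (k:ℝ) < ‖y‖ := fun k => hb k
  choose Y hYS hYk using h'
  set x : ℕ → (Fin n → ℝ) × ℝ := fun k => (Y k, 1) with hx
  have hxC : ∀ k, x k ∈ coneGen (intCastPt '' S) := fun k => hYS k
  have hxnorm : ∀ k : ℕ, (k:ℝ) < ‖x k‖ := fun k => lt_of_lt_of_le (hYk k) (norm_fst_le (x k))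
  have hxpos : ∀ k, (0:ℝ) < ‖x k‖ := fun k => by
    have h1 : (1:ℝ) ≤ ‖x k‖ := by
      have := norm_snd_le (x k)
      simpa [hx] using this
    linarith
  set u : ℕ → (Fin n → ℝ) × ℝ := fun k => ‖x k‖⁻¹ • x k with hu
  have huC : ∀ k, u k ∈ coneGen (intCastPt '' S) := fun k =>
    smul_mem_coneGen (hxC k) (inv_nonneg.mpr (hxpos k).le)
  have hunorm : ∀ k, ‖u k‖ = 1 := fun k => by
    rw [hu]
    simp only [norm_smul, norm_inv, norm_norm]
    rw [inv_mul_cancel₀ (ne_of_gt (hxpos k))]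
  have husph : ∀ k, u k ∈ Metric.sphere (0 : (Fin n → ℝ) × ℝ) 1 := fun k => by
    rw [mem_sphere_zero_iff_norm]; exact hunorm k
  obtain ⟨L, hLsph, φ, hφ, hconv⟩ := (isCompact_sphere (0 : (Fin n → ℝ) × ℝ) 1).tendsto_subseq husph
  have hLC : L ∈ coneGen (intCastPt '' S) :=
    isClosed_closure.mem_of_tendsto hconv (Filter.Eventually.of_forall fun k => huC (φ k))
  have hL2 : L.2 = 0 := by
    have ht1 : Tendsto (fun k => (u (φ k)).2) atTop (𝓝 L.2) :=
      (continuous_snd.tendsto _).comp hconv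
    have ht2 : Tendsto (fun k => (u (φ k)).2) atTop (𝓝 (0:ℝ)) := by
      apply tendsto_of_tendsto_of_tendsto_of_le_of_le'
        (g := fun _ : ℕ => (0:ℝ)) (h := fun k : ℕ => ((k:ℝ))⁻¹)
      · exact tendsto_const_nhds
      · exact tendsto_inv_atTop_zero.comp tendsto_natCast_atTop_atTop
      · filter_upwards with k
        have : (u (φ k)).2 = ‖x (φ k)‖⁻¹ := by
          simp [hu, hx]
        rw [this]
        exact inv_nonneg.mpr (hxpos _).le
      · filter_upwards [eventually_ge_atTop 1] with k hk
        have hkpos : (0:ℝ) < k := by exact_mod_cast Nat.lt_of_lt_of_le Nat.zero_lt_one hk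
        have hlt : (k:ℝ) < ‖x (φ k)‖ := by
          have h1 : (k:ℝ) ≤ (φ k : ℝ) := by exact_mod_cast hφ.le_apply
          exact lt_of_le_of_lt h1 (hxnorm (φ k))
        have : (u (φ k)).2 = ‖x (φ k)‖⁻¹ := by simp [hu, hx]
        rw [this]
        exact (inv_le_inv₀ (lt_trans hkpos hlt) hkpos).mpr hlt.le
    exact tendsto_nhds_unique ht1 ht2
  have hL0 : L = 0 := hlevel L hLC hL2
  have : (1:ℝ) = 0 := by
    have := mem_sphere_zero_iff_norm.mp hLsph
    rw [hL0, norm_zero] at this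
    exact this.symm
  exact one_ne_zero this

end Stmt14

/-- if `S₁, S₂ ⊆ ℤ^n × ℤ_{≥0}` are strongly non-negative semigroups with
almost all levels (`m(S₁) = m(S₂) = 1`), then the Newton–Okounkov body of the levelwise
sum `S₁ ⊕_t S₂` is the Minkowski sum of the Newton–Okounkov bodies of `S₁` and `S₂`. -/
theorem stmt14 {n : ℕ} (S1 S2 : Set ((Fin n → ℤ) × ℤ))
    (hadd1 : ∀ p ∈ S1, ∀ q ∈ S1, p + q ∈ S1)
    (hadd2 : ∀ p ∈ S2, ∀ q ∈ S2, p + q ∈ S2)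
    (hnneg1 : ∀ p ∈ S1, 0 ≤ p.2) (hnneg2 : ∀ p ∈ S2, 0 ≤ p.2)
    (hpos1 : ∃ p ∈ S1, p.2 ≠ 0) (hpos2 : ∃ p ∈ S2, p.2 ≠ 0)
    (hline1 : ∀ x ∈ coneGen (intCastPt '' S1), -x ∈ coneGen (intCastPt '' S1) → x = 0)
    (hline2 : ∀ x ∈ coneGen (intCastPt '' S2), -x ∈ coneGen (intCastPt '' S2) → x = 0)
    (hlevel1 : ∀ x ∈ coneGen (intCastPt '' S1), x.2 = 0 → x = 0)
    (hlevel2 : ∀ x ∈ coneGen (intCastPt '' S2), x.2 = 0 → x = 0)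
    (hm1 : AddSubgroup.map (AddMonoidHom.snd (Fin n → ℤ) ℤ) (AddSubgroup.closure S1) = ⊤)
    (hm2 : AddSubgroup.map (AddMonoidHom.snd (Fin n → ℤ) ℤ) (AddSubgroup.closure S2) = ⊤) :
    NObody0 (levelwiseSum S1 S2) = NObody0 S1 + NObody0 S2 := by
  classical
  set S := levelwiseSum S1 S2 with hSdef
  have haddS : ∀ p ∈ S, ∀ q ∈ S, p + q ∈ S := by
    rintro p ⟨a, b, ha, hb, hab⟩ q ⟨a', b', ha', hb', hab'⟩
    refine ⟨a + a', b + b', ?_, ?_, ?_⟩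
    · exact hadd1 _ ha _ ha'
    · exact hadd2 _ hb _ hb'
    · show p.1 + q.1 = a + a' + (b + b')
      rw [hab, hab']; abel
  have hcomp1 := Stmt14.isCompact_NObody0 hnneg1 hlevel1
  have hcomp2 := Stmt14.isCompact_NObody0 hnneg2 hlevel2
  have hclosed : IsClosed (NObody0 S1 + NObody0 S2) := (hcomp1.add hcomp2).isClosed
  apply Set.Subset.antisymm
  · intro y hy
    have h1 : y ∈ closure (Stmt14.ratioSet S) := Stmt14.NObody0_subset_closure_ratioSet haddS hy
    have h2 : Stmt14.ratioSet S ⊆ NObody0 S1 + NObody0 S2 := by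
      rintro q ⟨p, hp, hpos, rfl⟩
      obtain ⟨a, b, ha, hb, hab⟩ := hp
      have m1 : (fun i => ((a i : ℝ)) / (p.2 : ℝ)) ∈ NObody0 S1 :=
        Stmt14.ratioSet_subset_NObody0 ⟨(a, p.2), ha, hpos, rfl⟩
      have m2 : (fun i => ((b i : ℝ)) / (p.2 : ℝ)) ∈ NObody0 S2 :=
        Stmt14.ratioSet_subset_NObody0 ⟨(b, p.2), hb, hpos, rfl⟩
      have key : (fun i => (p.1 i : ℝ) / (p.2 : ℝ))
          = (fun i => ((a i : ℝ)) / (p.2 : ℝ)) + (fun i => ((b i : ℝ)) / (p.2 : ℝ)) := by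
        funext i
        show (p.1 i : ℝ) / (p.2 : ℝ) = (a i : ℝ) / (p.2 : ℝ) + (b i : ℝ) / (p.2 : ℝ)
        rw [hab]
        show (((a + b) i : ℤ) : ℝ) / (p.2 : ℝ) = _
        rw [Pi.add_apply]
        push_cast
        rw [add_div]
      rw [key]
      exact Set.add_mem_add m1 m2
    exact closure_minimal h2 hclosed h1
  · intro y hy
    rw [Set.mem_add] at hy
    obtain ⟨y1, h1, y2, h2, rfl⟩ := hy
    have hc1 : y1 ∈ closure (Stmt14.ratioSet S1) := Stmt14.NObody0_subset_closure_ratioSet hadd1 h1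
    have hc2 : y2 ∈ closure (Stmt14.ratioSet S2) := Stmt14.NObody0_subset_closure_ratioSet hadd2 h2
    rw [mem_closure_iff_seq_limit] at hc1 hc2
    obtain ⟨q1, hq1mem, hq1t⟩ := hc1
    obtain ⟨q2, hq2mem, hq2t⟩ := hc2
    choose p1 hp1S hp1pos hq1eq using hq1mem
    choose p2 hp2S hp2pos hq2eq using hq2mem
    set w : ℕ → ((Fin n → ℤ) × ℤ) := fun k =>
      (((p2 k).2.toNat) • (p1 k).1 + ((p1 k).2.toNat) • (p2 k).1,
        ((p2 k).2.toNat) • (p1 k).2) with hw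
    have hgpos : ∀ k, 0 < ((p2 k).2).toNat := fun k => by
      have := hp2pos k; omega
    have hhpos : ∀ k, 0 < ((p1 k).2).toNat := fun k => by
      have := hp1pos k; omega
    have hwpos : ∀ k, 0 < (w k).2 := fun k => by
      show 0 < ((p2 k).2.toNat) • (p1 k).2
      rw [nsmul_eq_mul]
      have h1' := hp1pos k
      have h2' := hgpos k
      positivity
    have hwS : ∀ k, w k ∈ S := by
      intro k
      have hu : ((p2 k).2.toNat) • (p1 k) ∈ S1 :=
        Stmt14.nsmul_mem hadd1 (hp1S k) _ (hgpos k)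
      have hv : ((p1 k).2.toNat) • (p2 k) ∈ S2 :=
        Stmt14.nsmul_mem hadd2 (hp2S k) _ (hhpos k)
      refine ⟨((p2 k).2.toNat) • (p1 k).1, ((p1 k).2.toNat) • (p2 k).1, ?_, ?_, rfl⟩
      · exact hu
      · have heq : ((p2 k).2.toNat) • (p1 k).2 = ((p1 k).2.toNat) • (p2 k).2 := by
          have hg := (hp2pos k).le
          have hh := (hp1pos k).le
          rw [nsmul_eq_mul, nsmul_eq_mul, Int.toNat_of_nonneg hg, Int.toNat_of_nonneg hh]
          ring
        show ((((p1 k).2.toNat) • (p2 k).1, ((p2 k).2.toNat) • (p1 k).2) :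
          (Fin n → ℤ) × ℤ) ∈ S2
        rw [heq]
        exact hv
    set r : ℕ → (Fin n → ℝ) := fun k i => ((w k).1 i : ℝ) / ((w k).2 : ℝ) with hr
    have hreq : ∀ k, r k = q1 k + q2 k := by
      intro k
      funext i
      have hg : (0:ℝ) < ((p2 k).2 : ℝ) := by exact_mod_cast hp2pos k
      have hh : (0:ℝ) < ((p1 k).2 : ℝ) := by exact_mod_cast hp1pos k
      have e1 : (((w k).1 i : ℤ) : ℝ)
          = ((p2 k).2 : ℝ) * ((p1 k).1 i : ℝ) + ((p1 k).2 : ℝ) * ((p2 k).1 i : ℝ) := by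
        show (((((p2 k).2.toNat) • (p1 k).1 + ((p1 k).2.toNat) • (p2 k).1) i : ℤ) : ℝ) = _
        simp only [Pi.add_apply, Pi.smul_apply, nsmul_eq_mul, Pi.mul_apply, Pi.natCast_apply]
        push_cast [Int.toNat_of_nonneg (hp2pos k).le, Int.toNat_of_nonneg (hp1pos k).le]
        ring
      have e2 : (((w k).2 : ℤ) : ℝ) = ((p2 k).2 : ℝ) * ((p1 k).2 : ℝ) := by
        show (((((p2 k).2.toNat) • (p1 k).2) : ℤ) : ℝ) = _
        rw [nsmul_eq_mul]
        push_cast [Int.toNat_of_nonneg (hp2pos k).le]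
        ring
      have h1i : q1 k i = ((p1 k).1 i : ℝ) / ((p1 k).2 : ℝ) := by rw [hq1eq k]
      have h2i : q2 k i = ((p2 k).1 i : ℝ) / ((p2 k).2 : ℝ) := by rw [hq2eq k]
      show ((w k).1 i : ℝ) / ((w k).2 : ℝ) = q1 k i + q2 k i
      rw [h1i, h2i, e1, e2]
      field_simp
    have htend : Tendsto r atTop (𝓝 (y1 + y2)) :=
      (hq1t.add hq2t).congr fun k => (hreq k).symm
    have hrmem : ∀ k, r k ∈ NObody0 S := fun k =>
      Stmt14.ratioSet_subset_NObody0 ⟨w k, hwS k, hwpos k, rfl⟩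
    exact (Stmt14.isClosed_NObody0 S).mem_of_tendsto htend
      (Filter.Eventually.of_forall hrmem)
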